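/- Let T be a table with suppressed cell set E, total graph H' = (A, B, E'), and suppressed graph H = (A, B, E). Let P ⊆ E' − E. If P satisfies Property N1 (every connected component of (A, B, E ∪ P) is strongly connected) and Property N2 (for every connected component D of H, all vertices of D lie in a single connected component of (A, B, P)), then E is totally protected in the table T̄_P obtained from T by additionally suppressing the cells in P. -/

import Mathlib

/-- A two-dimensional table: values, lower/upper bounds, and a set of suppressed cells. -/
structure Table (R C : Type*) where
  val : R × C → ℝ
  lo : R × C → ℝ
  hi : R × C → ℝ
  sup : Set (R × C)
  lo_le : ∀ e, lo e ≤ val e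
  le_hi : ∀ e, val e ≤ hi e
  lo_lt_hi : ∀ e, lo e < hi e

variable {R C : Type*}

/-- A bounded feasible assignment of a table. -/
def BFA [Fintype R] [Fintype C] (T : Table R C) (x : R × C → ℝ) : Prop :=
  (∀ e, e ∉ T.sup → x e = T.val e) ∧
  (∀ e ∈ T.sup, T.lo e ≤ x e ∧ x e ≤ T.hi e) ∧
  (∀ i : R, ∑ j, x (i, j) = ∑ j, T.val (i, j)) ∧
  (∀ j : C, ∑ i, x (i, j) = ∑ i, T.val (i, j))

/-- One traversable step in the mixed graph with edge set `S`: the edge of a cell `e`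
may be traversed from its row endpoint to its column endpoint iff `val e < hi e`,
and from its column endpoint to its row endpoint iff `lo e < val e`. -/
def MStep (T : Table R C) (S : Set (R × C)) (v w : R ⊕ C) : Prop :=
  ∃ e ∈ S, (T.val e < T.hi e ∧ v = Sum.inl e.1 ∧ w = Sum.inr e.2) ∨
           (T.lo e < T.val e ∧ v = Sum.inr e.2 ∧ w = Sum.inl e.1)

/-- Reachability along traversable paths in the mixed graph with edge set `S`. -/
def MReach (T : Table R C) (S : Set (R × C)) : (R ⊕ C) → (R ⊕ C) → Prop :=
  Relation.ReflTransGen (MStep T S)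

/-- Mutual reachability in the mixed graph with edge set `S`. -/
def MutReach (T : Table R C) (S : Set (R × C)) (v w : R ⊕ C) : Prop :=
  MReach T S v w ∧ MReach T S w v

/-- `D` is a strongly connected component of the mixed graph with edge set `S`:
an equivalence class of mutual reachability. -/
def IsSCC (T : Table R C) (S : Set (R × C)) (D : Set (R ⊕ C)) : Prop :=
  ∃ v, D = {w | MutReach T S v w}

/-- Direction-blind adjacency via an edge in `S`. -/
def Adj (S : Set (R × C)) (v w : R ⊕ C) : Prop :=
  ∃ e ∈ S, (v = Sum.inl e.1 ∧ w = Sum.inr e.2) ∨ (v = Sum.inr e.2 ∧ w = Sum.inl e.1)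

/-- Direction-blind connectivity via edges in `S`. -/
def Conn (S : Set (R × C)) : (R ⊕ C) → (R ⊕ C) → Prop :=
  Relation.ReflTransGen (Adj S)

/-- `D` is a connected component of the (direction-blind) graph with edge set `S`. -/
def IsCC (S : Set (R × C)) (D : Set (R ⊕ C)) : Prop :=
  ∃ v, D = {w | Conn S v w}

/-- The edges of `S` with both endpoints in the vertex set `D`. -/
def EdgesIn (S : Set (R × C)) (D : Set (R ⊕ C)) : Set (R × C) :=
  {e | e ∈ S ∧ Sum.inl e.1 ∈ D ∧ Sum.inr e.2 ∈ D}

/-- All vertices of `D` are joined by direction-blind paths using edges in `S`. -/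
def ConnectedOn (S : Set (R × C)) (D : Set (R ⊕ C)) : Prop :=
  ∀ v ∈ D, ∀ w ∈ D, Conn S v w

/-- `F` is entire: it is the sum of a power series centered at some point with
infinite radius of convergence. -/
def Entire {ι : Type*} [Fintype ι] (F : (ι → ℝ) → ℝ) : Prop :=
  ∃ (p : FormalMultilinearSeries ℝ (ι → ℝ) ℝ) (c : ι → ℝ),
    HasFPowerSeriesOnBall F p c ⊤

/-- `F x` depends only on the coordinates `x e` with `e ∈ S`. -/
def DependsOnlyOn {ι : Type*} (F : (ι → ℝ) → ℝ) (S : Set ι) : Prop :=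
  ∀ x y : ι → ℝ, (∀ e ∈ S, x e = y e) → F x = F y

/-- `S` is the effective area of `F`: the smallest set of coordinates that `F`
depends on. -/
def IsEA {ι : Type*} (F : (ι → ℝ) → ℝ) (S : Set ι) : Prop :=
  DependsOnlyOn F S ∧ ∀ S', DependsOnlyOn F S' → S ⊆ S'

/-- `F` takes the same value at every bounded feasible assignment of `T`. -/
def TableInvariant [Fintype R] [Fintype C] (T : Table R C) (F : (R × C → ℝ) → ℝ) : Prop :=
  ∀ x y, BFA T x → BFA T y → F x = F y

/-- `Q` is totally protected in `T`: there is no nonconstant analytic invariant of `T`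
whose effective area is contained in `Q`. -/
def TotallyProtected [Fintype R] [Fintype C] (T : Table R C) (Q : Set (R × C)) : Prop :=
  ¬ ∃ (F : (R × C → ℝ) → ℝ) (S : Set (R × C)),
      Entire F ∧ DependsOnlyOn F T.sup ∧ TableInvariant T F ∧
      IsEA F S ∧ S ⊆ Q ∧ S.Nonempty

/-- The table obtained from `T` by additionally suppressing the cells in `P`. -/
def Table.addSup (T : Table R C) (P : Set (R × C)) : Table R C :=
  { T with sup := T.sup ∪ P }

attribute [local instance] Classical.propDecidable
set_option linter.unusedSectionVars false
set_option linter.unnecessarySeqFocus false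

section Aux
variable [Fintype R] [Fintype C]

/-- signed divergence of a flow -/
noncomputable def dvg (g : R × C → ℝ) : R ⊕ C → ℝ :=
  Sum.elim (fun i => ∑ j, g (i, j)) (fun j => -∑ i, g (i, j))

noncomputable def indf (u : R ⊕ C) : R ⊕ C → ℝ := fun w => if w = u then 1 else 0

lemma dvg_add (g h : R × C → ℝ) : dvg (g + h) = dvg g + dvg h := by
  funext w; cases w <;> simp [dvg, Finset.sum_add_distrib] <;> ring

lemma dvg_zero : dvg (0 : R × C → ℝ) = 0 := by
  funext w; cases w <;> simp [dvg]

lemma dvg_neg (g : R × C → ℝ) : dvg (-g) = - dvg g := by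
  funext w; cases w <;> simp [dvg]

lemma dvg_smul (c : ℝ) (g : R × C → ℝ) : dvg (c • g) = c • dvg g := by
  funext w; cases w <;> simp [dvg, Finset.mul_sum] <;> ring

noncomputable def arcp (e : R × C) : R × C → ℝ := fun f => if f = e then 1 else 0

lemma dvg_arcp (e : R × C) : dvg (arcp e) = indf (Sum.inl e.1) - indf (Sum.inr e.2) := by
  funext w
  cases w with
  | inl i =>
    have h1 : ∀ j : C, (if ((i, j) : R × C) = e then (1:ℝ) else 0)
        = if j = e.2 then (if i = e.1 then 1 else 0) else 0 := by
      intro j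
      by_cases h1 : i = e.1 <;> by_cases h2 : j = e.2 <;> simp [Prod.ext_iff, h1, h2]
    simp only [dvg, arcp, Sum.elim_inl, Pi.sub_apply]
    rw [Finset.sum_congr rfl (fun j _ => h1 j), Finset.sum_ite_eq' Finset.univ e.2]
    simp [indf]
  | inr j =>
    have h1 : ∀ i : R, (if ((i, j) : R × C) = e then (1:ℝ) else 0)
        = if i = e.1 then (if j = e.2 then 1 else 0) else 0 := by
      intro i
      by_cases h1 : i = e.1 <;> by_cases h2 : j = e.2 <;> simp [Prod.ext_iff, h1, h2]
    simp only [dvg, arcp, Sum.elim_inr, Pi.sub_apply]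
    rw [Finset.sum_congr rfl (fun i _ => h1 i), Finset.sum_ite_eq' Finset.univ e.1]
    simp [indf]

lemma arcp_apply_ne {e f : R × C} (h : f ≠ e) : arcp e f = 0 := by simp [arcp, h]

lemma arcp_apply_self (e : R × C) : arcp e e = 1 := by simp [arcp]

/-- a flow compatible with the slacks and supported on S' -/
def Good (T : Table R C) (S' : Set (R × C)) (g : R × C → ℝ) : Prop :=
  (∀ e, g e ≠ 0 → e ∈ S') ∧ (∀ e, 0 < g e → T.val e < T.hi e) ∧
  (∀ e, g e < 0 → T.lo e < T.val e)

lemma Good.add {T : Table R C} {S'} {g h : R × C → ℝ} (hg : Good T S' g)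
    (hh : Good T S' h) : Good T S' (g + h) := by
  refine ⟨fun e he => ?_, fun e he => ?_, fun e he => ?_⟩ <;>
    simp only [Pi.add_apply] at he
  · by_cases h1 : g e = 0
    · exact hh.1 e (by intro h2; rw [h1, h2] at he; simp at he)
    · exact hg.1 e h1
  · rcases lt_or_ge 0 (g e) with h1 | h1
    · exact hg.2.1 e h1
    · exact hh.2.1 e (by linarith)
  · rcases lt_or_ge (g e) 0 with h1 | h1
    · exact hg.2.2 e h1
    · exact hh.2.2 e (by linarith)

lemma Good.smul {T : Table R C} {S'} {g : R × C → ℝ} (hg : Good T S' g) {c : ℝ}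
    (hc : 0 ≤ c) : Good T S' (c • g) := by
  refine ⟨fun e he => ?_, fun e he => ?_, fun e he => ?_⟩ <;>
    simp only [Pi.smul_apply, smul_eq_mul] at he
  · apply hg.1 e; intro h; rw [h] at he; simp at he
  · apply hg.2.1 e; by_contra h1; push_neg at h1; nlinarith
  · apply hg.2.2 e; by_contra h1; push_neg at h1; nlinarith

lemma Good.zero {T : Table R C} {S'} : Good T S' (0 : R × C → ℝ) :=
  ⟨fun e he => absurd rfl he, fun e he => by simp at he, fun e he => by simp at he⟩

lemma good_arcp {T : Table R C} {S'} {e : R × C} (he : e ∈ S') (hlt : T.val e < T.hi e) :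
    Good T S' (arcp e) := by
  refine ⟨fun f hf => ?_, fun f hf => ?_, fun f hf => ?_⟩
  · by_cases h : f = e
    · exact h ▸ he
    · exact absurd (arcp_apply_ne h) hf
  · by_cases h : f = e
    · exact h ▸ hlt
    · rw [arcp_apply_ne h] at hf; linarith
  · by_cases h : f = e <;> simp [arcp, h] at hf <;> linarith

lemma good_arcm {T : Table R C} {S'} {e : R × C} (he : e ∈ S') (hlt : T.lo e < T.val e) :
    Good T S' (-arcp e) := by
  refine ⟨fun f hf => ?_, fun f hf => ?_, fun f hf => ?_⟩
  · by_cases h : f = e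
    · exact h ▸ he
    · simp [arcp_apply_ne h] at hf
  · by_cases h : f = e <;> simp [arcp, h] at hf <;> linarith
  · by_cases h : f = e
    · exact h ▸ hlt
    · simp [arcp_apply_ne h] at hf

/-- a feasible walk flow from u to v -/
def FW (T : Table R C) (S' : Set (R × C)) (u v : R ⊕ C) (g : R × C → ℝ) : Prop :=
  Good T S' g ∧ dvg g = indf u - indf v

lemma fw_arcp {T : Table R C} {S'} {e : R × C} (he : e ∈ S') (hlt : T.val e < T.hi e) :
    FW T S' (Sum.inl e.1) (Sum.inr e.2) (arcp e) :=
  ⟨good_arcp he hlt, dvg_arcp e⟩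

lemma fw_arcm {T : Table R C} {S'} {e : R × C} (he : e ∈ S') (hlt : T.lo e < T.val e) :
    FW T S' (Sum.inr e.2) (Sum.inl e.1) (-arcp e) :=
  ⟨good_arcm he hlt, by rw [dvg_neg, dvg_arcp]; ring⟩

lemma FW.add {T : Table R C} {S'} {u v w : R ⊕ C} {g h : R × C → ℝ}
    (hg : FW T S' u v g) (hh : FW T S' v w h) : FW T S' u w (g + h) :=
  ⟨hg.1.add hh.1, by rw [dvg_add, hg.2, hh.2]; ring⟩

lemma mreach_flow {T : Table R C} {S' : Set (R × C)} {u v : R ⊕ C}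
    (h : MReach T S' u v) : ∃ g, FW T S' u v g := by
  induction h with
  | refl => exact ⟨0, Good.zero, by rw [dvg_zero]; ring⟩
  | tail hab hbc ih =>
    obtain ⟨g, hg⟩ := ih
    obtain ⟨e, he, hcase⟩ := hbc
    rcases hcase with ⟨hlt, hv, hw⟩ | ⟨hlt, hv, hw⟩
    · exact ⟨g + arcp e, hg.add (hv ▸ hw ▸ fw_arcp he hlt)⟩
    · exact ⟨g + (-arcp e), hg.add (hv ▸ hw ▸ fw_arcm he hlt)⟩

end Aux

section Graph
variable [Fintype R] [Fintype C]
variable {T : Table R C} {P : Set (R × C)}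

/-- the span of feasible circulations -/
noncomputable def Wsp (T : Table R C) (S' : Set (R × C)) : Submodule ℝ (R × C → ℝ) :=
  Submodule.span ℝ {g | Good T S' g ∧ dvg g = 0}

lemma circ_mem_Wsp {S'} {g : R × C → ℝ} (hg : Good T S' g) (hd : dvg g = 0) :
    g ∈ Wsp T S' :=
  Submodule.subset_span ⟨hg, hd⟩

lemma fw_sub_mem {S'} {u v : R ⊕ C} {p p' r : R × C → ℝ}
    (hp : FW T S' u v p) (hp' : FW T S' u v p') (hr : FW T S' v u r) :
    p - p' ∈ Wsp T S' := by
  have h1 : p + r ∈ Wsp T S' :=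
    circ_mem_Wsp (hp.add hr).1 (by rw [(hp.add hr).2]; ring)
  have h2 : p' + r ∈ Wsp T S' :=
    circ_mem_Wsp (hp'.add hr).1 (by rw [(hp'.add hr).2]; ring)
  have : p - p' = (p + r) - (p' + r) := by ring
  rw [this]; exact Submodule.sub_mem _ h1 h2

variable (hN1 : ∀ D : Set (R ⊕ C), IsCC (T.sup ∪ P) D →
      ∀ v ∈ D, ∀ w ∈ D, MutReach T (T.sup ∪ P) v w)

include hN1 in
lemma conn_mutreach {u v : R ⊕ C} (h : Conn (T.sup ∪ P) u v) :
    MutReach T (T.sup ∪ P) u v :=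
  hN1 {w | Conn (T.sup ∪ P) u w} ⟨u, rfl⟩ u Relation.ReflTransGen.refl v h

lemma conn_mono {S1 S2 : Set (R × C)} (hS : S1 ⊆ S2) {u v : R ⊕ C} (h : Conn S1 u v) :
    Conn S2 u v := by
  refine Relation.ReflTransGen.mono ?_ _ _ h
  rintro x y ⟨e, he, hc⟩
  exact ⟨e, hS he, hc⟩

include hN1 in
/-- Key induction: an undirected path within P yields a flow h supported on P such
that h plus any feasible return flow lies in the circulation span. -/
lemma claimL {u v : R ⊕ C} (h : Conn P u v) :
    ∃ h' : R × C → ℝ, (∀ e, h' e ≠ 0 → e ∈ P) ∧ dvg h' = indf u - indf v ∧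
      ∀ p, FW T (T.sup ∪ P) v u p → h' + p ∈ Wsp T (T.sup ∪ P) := by
  induction h with
  | refl =>
    refine ⟨0, fun e he => absurd rfl he, by rw [dvg_zero]; ring, fun p hp => ?_⟩
    have : (0 : R × C → ℝ) + p = p := by ring
    rw [this]
    exact circ_mem_Wsp hp.1 (by rw [hp.2]; ring)
  | @tail b w hab hbc ih =>
    obtain ⟨h', hsupp, hdvg, hW⟩ := ih
    obtain ⟨e, he, hcase⟩ := hbc
    have heEP : e ∈ T.sup ∪ P := Or.inr he
    -- u, b, w are all in the same component of T.sup ∪ P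
    have hconn_ub : Conn (T.sup ∪ P) u b :=
      conn_mono Set.subset_union_right hab
    have hconn_bw : Conn (T.sup ∪ P) b w :=
      Relation.ReflTransGen.single ⟨e, heEP, hcase⟩
    have m_ub := conn_mutreach hN1 hconn_ub
    have m_bw := conn_mutreach hN1 hconn_bw
    obtain ⟨r1, hr1⟩ : ∃ g, FW T (T.sup ∪ P) b u g := mreach_flow m_ub.2
    obtain ⟨r2, hr2⟩ : ∃ g, FW T (T.sup ∪ P) w b g := mreach_flow m_bw.2
    obtain ⟨r3, hr3⟩ : ∃ g, FW T (T.sup ∪ P) u w g :=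
      mreach_flow (Relation.ReflTransGen.trans m_ub.1 m_bw.1)
    obtain ⟨rbw, hrbw⟩ : ∃ g, FW T (T.sup ∪ P) b w g := mreach_flow m_bw.1
    -- the arc flow q across e from b to w
    obtain ⟨q, hq_supp, hq_dvg, hqW⟩ :
        ∃ q : R × C → ℝ, (∀ f, q f ≠ 0 → f ∈ P) ∧ (dvg q = indf b - indf w) ∧
          q + r2 ∈ Wsp T (T.sup ∪ P) := by
      rcases hcase with ⟨hv, hw⟩ | ⟨hv, hw⟩
      · -- q = arcp e , b = inl e.1, w = inr e.2
        refine ⟨arcp e, fun f hf => ?_, by rw [dvg_arcp, hv, hw], ?_⟩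
        · by_cases hfe : f = e
          · exact hfe ▸ he
          · exact absurd (arcp_apply_ne hfe) hf
        · by_cases hlt : T.val e < T.hi e
          · exact circ_mem_Wsp ((good_arcp heEP hlt).add hr2.1)
              (by rw [dvg_add, dvg_arcp, hr2.2, hv, hw]; ring)
          · have hvalhi : T.val e = T.hi e := le_antisymm (T.le_hi e) (not_lt.mp hlt)
            have hlo : T.lo e < T.val e := by have := T.lo_lt_hi e; linarith
            -- -arcp e is feasible from w to b ; arcp e + r2 = r2 - (-arcp e)
            have hfm : FW T (T.sup ∪ P) w b (-arcp e) := hv ▸ hw ▸ fw_arcm heEP hlo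
            have : arcp e + r2 = r2 - (-arcp e) := by ring
            rw [this]
            exact fw_sub_mem hr2 hfm hrbw
      · -- q = -arcp e , b = inr e.2, w = inl e.1
        refine ⟨-arcp e, fun f hf => ?_, by rw [dvg_neg, dvg_arcp, hv, hw]; ring, ?_⟩
        · by_cases hfe : f = e
          · exact hfe ▸ he
          · simp [arcp_apply_ne hfe] at hf
        · by_cases hlt : T.lo e < T.val e
          · exact circ_mem_Wsp ((good_arcm heEP hlt).add hr2.1)
              (by rw [dvg_add, dvg_neg, dvg_arcp, hr2.2, hv, hw]; ring)
          · have hvallo : T.lo e = T.val e := le_antisymm (T.lo_le e) (not_lt.mp hlt)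
            have hhi : T.val e < T.hi e := by have := T.lo_lt_hi e; linarith
            have hfp : FW T (T.sup ∪ P) w b (arcp e) := hv ▸ hw ▸ fw_arcp heEP hhi
            have : -arcp e + r2 = r2 - arcp e := by ring
            rw [this]
            exact fw_sub_mem hr2 hfp hrbw
    refine ⟨h' + q, fun f hf => ?_, by rw [dvg_add, hdvg, hq_dvg]; ring, fun p hp => ?_⟩
    · by_cases h1 : h' f = 0
      · exact hq_supp f (by intro h2; rw [Pi.add_apply, h1, h2] at hf; simp at hf)
      · exact hsupp f h1
    · -- h' + q + p = (h' + r1) + (q + r2) + (p - (r1 + r2))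
      have hW1 : h' + r1 ∈ Wsp T (T.sup ∪ P) := hW r1 hr1
      have hr12 : FW T (T.sup ∪ P) w u (r2 + r1) := hr2.add hr1
      have hW3 : p - (r2 + r1) ∈ Wsp T (T.sup ∪ P) := fw_sub_mem hp hr12 hr3
      have heq : h' + q + p = (h' + r1) + (q + r2) + (p - (r2 + r1)) := by ring
      rw [heq]
      exact Submodule.add_mem _ (Submodule.add_mem _ hW1 hqW) hW3

end Graph

section Graph2
variable [Fintype R] [Fintype C]
variable {T : Table R C} {P : Set (R × C)}
variable (hN1 : ∀ D : Set (R ⊕ C), IsCC (T.sup ∪ P) D →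
      ∀ v ∈ D, ∀ w ∈ D, MutReach T (T.sup ∪ P) v w)

include hN1 in
lemma exists_unit_vec (hP : ∀ e ∈ P, e ∉ T.sup)
    (hN2 : ∀ D : Set (R ⊕ C), IsCC T.sup D → ∀ v ∈ D, ∀ w ∈ D, Conn P v w)
    {e : R × C} (he : e ∈ T.sup) :
    ∃ w ∈ Wsp T (T.sup ∪ P), w e = 1 ∧ ∀ f ∈ T.sup, f ≠ e → w f = 0 := by
  have hD : IsCC T.sup {x | Conn T.sup (Sum.inl e.1) x} := ⟨_, rfl⟩
  have h1 : Sum.inl e.1 ∈ {x | Conn T.sup (Sum.inl e.1) x} := Relation.ReflTransGen.refl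
  have h2 : Sum.inr e.2 ∈ {x | Conn T.sup (Sum.inl e.1) x} :=
    Relation.ReflTransGen.single ⟨e, he, Or.inl ⟨rfl, rfl⟩⟩
  have heEP : e ∈ T.sup ∪ P := Or.inl he
  have heP : e ∉ P := fun h => hP e h he
  by_cases hlt : T.val e < T.hi e
  · obtain ⟨h', hsupp, -, hW⟩ := claimL hN1 (hN2 _ hD _ h2 _ h1)
    refine ⟨h' + arcp e, hW _ (fw_arcp heEP hlt), ?_, ?_⟩
    · have hz : h' e = 0 := by by_contra h; exact heP (hsupp e h)
      simp [hz, arcp_apply_self]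
    · intro f hf hfe
      have hz : h' f = 0 := by by_contra h; exact (hP f (hsupp f h)) hf
      simp [hz, arcp_apply_ne hfe]
  · have hlo : T.lo e < T.val e := by
      have := T.lo_lt_hi e; have := T.le_hi e; linarith
    obtain ⟨h', hsupp, -, hW⟩ := claimL hN1 (hN2 _ hD _ h1 _ h2)
    refine ⟨-(h' + -arcp e), Submodule.neg_mem _ (hW _ (fw_arcm heEP hlo)), ?_, ?_⟩
    · have hz : h' e = 0 := by by_contra h; exact heP (hsupp e h)
      simp [hz, arcp_apply_self]
    · intro f hf hfe
      have hz : h' f = 0 := by by_contra h; exact (hP f (hsupp f h)) hf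
      simp [hz, arcp_apply_ne hfe]

end Graph2

lemma dvg_sum [Fintype R] [Fintype C] {ι : Type*} (t : Finset ι) (f : ι → R × C → ℝ) :
    dvg (∑ i ∈ t, f i) = ∑ i ∈ t, dvg (f i) := by
  induction t using Finset.cons_induction with
  | empty => simp [dvg_zero]
  | cons a t ha ih => rw [Finset.sum_cons, Finset.sum_cons, dvg_add, ih]

/-- If `P ⊆ E' - E` satisfies Property N1 (every connected component of the mixed
graph with edge set `E ∪ P` is strongly connected) and Property N2 (the vertices of
each connected component of the suppressed graph are connected in `(A, B, P)`),
then `E` is totally protected in the table obtained by also suppressing `P`. -/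
theorem stmt9 [Fintype R] [Fintype C] [Nonempty R] [Nonempty C]
    (T : Table R C) (P : Set (R × C)) (hP : ∀ e ∈ P, e ∉ T.sup)
    (hN1 : ∀ D : Set (R ⊕ C), IsCC (T.sup ∪ P) D →
      ∀ v ∈ D, ∀ w ∈ D, MutReach T (T.sup ∪ P) v w)
    (hN2 : ∀ D : Set (R ⊕ C), IsCC T.sup D → ∀ v ∈ D, ∀ w ∈ D, Conn P v w) :
    TotallyProtected (T.addSup P) T.sup := by
  rintro ⟨F, S, ⟨pw, cc0, hFp⟩, -, hinv, ⟨hdS, hmin⟩, hSsub, hSne⟩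
  classical
  suffices hconst : ∀ x, F x = F T.val by
    have hdep0 : DependsOnlyOn F (∅ : Set (R × C)) :=
      fun x y _ => (hconst x).trans (hconst y).symm
    obtain ⟨e, heS⟩ := hSne
    exact hmin ∅ hdep0 heS
  -- a finite spanning subset of the feasible circulations
  obtain ⟨s, hsG, hspan, hli⟩ :=
    exists_linearIndependent ℝ {g | Good T (T.sup ∪ P) g ∧ dvg g = 0}
  have hsfin : s.Finite := hli.setFinite
  haveI := hsfin.fintype
  -- constants
  have hne : (Finset.univ : Finset (R × C)).Nonempty := Finset.univ_nonempty
  set δ : ℝ := Finset.univ.inf' hne (fun e : R × C =>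
    min (if T.val e < T.hi e then T.hi e - T.val e else 1)
        (if T.lo e < T.val e then T.val e - T.lo e else 1)) with hδdef
  have hδpos : 0 < δ := by
    rw [hδdef, Finset.lt_inf'_iff]
    intro e _
    refine lt_min ?_ ?_ <;> split_ifs with h <;> first | linarith | norm_num
  have hδ1 : ∀ e : R × C, T.val e < T.hi e → δ ≤ T.hi e - T.val e := by
    intro e h
    calc δ ≤ _ := Finset.inf'_le _ (Finset.mem_univ e)
    _ ≤ (if T.val e < T.hi e then T.hi e - T.val e else 1) := min_le_left _ _
    _ = T.hi e - T.val e := if_pos h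
  have hδ2 : ∀ e : R × C, T.lo e < T.val e → δ ≤ T.val e - T.lo e := by
    intro e h
    calc δ ≤ _ := Finset.inf'_le _ (Finset.mem_univ e)
    _ ≤ (if T.lo e < T.val e then T.val e - T.lo e else 1) := min_le_right _ _
    _ = T.val e - T.lo e := if_pos h
  set K : ℝ := Finset.univ.sup' hne (fun e : R × C => ∑ i : s, |(i : R × C → ℝ) e|)
    with hKdef
  have hKnonneg : 0 ≤ K := by
    obtain ⟨e, he⟩ := hne
    exact le_trans (Finset.sum_nonneg fun i _ => abs_nonneg _)
      (Finset.le_sup' (fun e : R × C => ∑ i : s, |(i : R × C → ℝ) e|) he)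
  set ε : ℝ := δ / (K + 1) with hεdef
  have hεpos : 0 < ε := div_pos hδpos (by linarith)
  have hεK : ε * K < δ := by
    have h1 : ε * (K + 1) = δ := by rw [hεdef]; field_simp
    nlinarith
  -- the affine parametrization
  set Φ : (s → ℝ) → (R × C → ℝ) :=
    fun c => T.val + ∑ i : s, c i • (i : R × C → ℝ) with hΦdef
  have hBFA : ∀ c : s → ℝ, (∀ i, 0 ≤ c i) → (∀ i, c i ≤ ε) →
      BFA (T.addSup P) (Φ c) := by
    intro c hc0 hcε
    set g : R × C → ℝ := ∑ i : s, c i • (i : R × C → ℝ) with hgdef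
    have hgood : Good T (T.sup ∪ P) g := by
      rw [hgdef]
      exact Finset.sum_induction _ _ (fun a b ha hb => ha.add hb) Good.zero
        (fun i _ => ((hsG i.2).1).smul (hc0 i))
    have hdvg : dvg g = 0 := by
      rw [hgdef, dvg_sum]
      refine Finset.sum_eq_zero fun i _ => ?_
      rw [dvg_smul, (hsG i.2).2, smul_zero]
    have hbound : ∀ e, |g e| ≤ ε * K := by
      intro e
      have h1 : g e = ∑ i : s, c i * (i : R × C → ℝ) e := by
        rw [hgdef]; simp [Finset.sum_apply]
      rw [h1]
      calc |∑ i : s, c i * (i : R × C → ℝ) e| ≤ ∑ i : s, |c i * (i : R × C → ℝ) e| :=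
            Finset.abs_sum_le_sum_abs _ _
      _ ≤ ∑ i : s, ε * |(i : R × C → ℝ) e| := by
            refine Finset.sum_le_sum fun i _ => ?_
            rw [abs_mul, abs_of_nonneg (hc0 i)]
            exact mul_le_mul_of_nonneg_right (hcε i) (abs_nonneg _)
      _ = ε * ∑ i : s, |(i : R × C → ℝ) e| := by rw [Finset.mul_sum]
      _ ≤ ε * K := by
            refine mul_le_mul_of_nonneg_left ?_ (le_of_lt hεpos)
            exact Finset.le_sup' (fun e : R × C => ∑ i : s, |(i : R × C → ℝ) e|)
              (Finset.mem_univ e)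
    have hΦg : Φ c = T.val + g := by rw [hΦdef, hgdef]
    refine ⟨?_, ?_, ?_, ?_⟩
    · intro e he
      have hz : g e = 0 := by
        by_contra h; exact he (hgood.1 e h)
      show Φ c e = T.val e
      rw [hΦg]; simp [hz]
    · intro e _
      have hb := hbound e
      rcases lt_trichotomy (g e) 0 with h | h | h
      · have hlo : T.lo e < T.val e := hgood.2.2 e h
        have := hδ2 e hlo
        have habs : -(ε * K) ≤ g e := by
          have := abs_le.mp hb; linarith [this.1]
        constructor
        · show T.lo e ≤ Φ c e
          rw [hΦg]; simp only [Pi.add_apply]; linarith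
        · show Φ c e ≤ T.hi e
          rw [hΦg]; simp only [Pi.add_apply]
          have := T.le_hi e; linarith
      · constructor
        · show T.lo e ≤ Φ c e
          rw [hΦg]; simp only [Pi.add_apply, h]
          have := T.lo_le e; linarith
        · show Φ c e ≤ T.hi e
          rw [hΦg]; simp only [Pi.add_apply, h]
          have := T.le_hi e; linarith
      · have hhi : T.val e < T.hi e := hgood.2.1 e h
        have := hδ1 e hhi
        have habs : g e ≤ ε * K := le_trans (le_abs_self _) hb
        constructor
        · show T.lo e ≤ Φ c e
          rw [hΦg]; simp only [Pi.add_apply]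
          have := T.lo_le e; linarith
        · show Φ c e ≤ T.hi e
          rw [hΦg]; simp only [Pi.add_apply]; linarith
    · intro i
      have h1 : ∑ j, g (i, j) = 0 := by
        have := congrFun hdvg (Sum.inl i)
        simpa [dvg] using this
      show ∑ j, Φ c (i, j) = ∑ j, T.val (i, j)
      rw [hΦg]
      simp only [Pi.add_apply]
      rw [Finset.sum_add_distrib, h1, add_zero]
    · intro j
      have h1 : ∑ i, g (i, j) = 0 := by
        have := congrFun hdvg (Sum.inr j)
        simp only [dvg, Sum.elim_inr, Pi.zero_apply, neg_eq_zero] at this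
        exact this
      show ∑ i, Φ c (i, j) = ∑ i, T.val (i, j)
      rw [hΦg]
      simp only [Pi.add_apply]
      rw [Finset.sum_add_distrib, h1, add_zero]
  have hvalBFA : BFA (T.addSup P) T.val :=
    ⟨fun e _ => rfl, fun e _ => ⟨T.lo_le e, T.le_hi e⟩, fun i => rfl, fun j => rfl⟩
  -- analytic continuation
  have hFA : AnalyticOnNhd ℝ F Set.univ := fun y _ =>
    hFp.analyticAt_of_mem (by simp [EMetric.mem_ball, edist_lt_top])
  set L : (s → ℝ) →L[ℝ] (R × C → ℝ) :=
    ∑ i : s, (ContinuousLinearMap.proj i).smulRight (i : R × C → ℝ) with hLdef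
  have hLΦ : Φ = fun c => T.val + L c := by
    funext c
    rw [hΦdef, hLdef]
    simp [ContinuousLinearMap.sum_apply]
  have hΦA : AnalyticOnNhd ℝ Φ Set.univ := by
    rw [hLΦ]
    exact fun c _ => analyticAt_const.add (L.analyticAt c)
  have hΨA : AnalyticOnNhd ℝ (F ∘ Φ) Set.univ := hFA.comp hΦA (Set.mapsTo_univ _ _)
  set U : Set (s → ℝ) := Set.univ.pi (fun _ => Set.Ioo 0 ε) with hUdef
  have hUopen : IsOpen U := isOpen_set_pi Set.finite_univ (fun _ _ => isOpen_Ioo)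
  have hc0U : (fun _ => ε / 2) ∈ U := by
    intro i _
    exact ⟨by linarith, by linarith⟩
  have hev : F ∘ Φ =ᶠ[nhds (fun _ => ε / 2)] (fun _ => F T.val) := by
    filter_upwards [hUopen.mem_nhds hc0U] with c hc
    have h1 : BFA (T.addSup P) (Φ c) :=
      hBFA c (fun i => le_of_lt (hc i trivial).1) (fun i => le_of_lt (hc i trivial).2)
    exact hinv _ _ h1 hvalBFA
  have hconstΦ : ∀ c, F (Φ c) = F T.val := by
    have := AnalyticOnNhd.eqOn_of_preconnected_of_eventuallyEq hΨA analyticOnNhd_const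
      isPreconnected_univ (Set.mem_univ (fun _ => ε / 2)) hev
    exact fun c => this (Set.mem_univ c)
  have hWconst : ∀ w ∈ Wsp T (T.sup ∪ P), F (T.val + w) = F T.val := by
    intro w hw
    have hw2 : w ∈ Submodule.span ℝ s := by rw [hspan]; exact hw
    have hw3 : w ∈ Submodule.span ℝ (Set.range ((↑) : s → (R × C → ℝ))) := by
      rw [Subtype.range_coe]; exact hw2
    obtain ⟨c, hc⟩ := (Submodule.mem_span_range_iff_exists_fun ℝ).mp hw3
    have h2 : Φ c = T.val + ∑ i : s, c i • (i : R × C → ℝ) := rfl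
    have h1 : T.val + w = Φ c := by rw [h2, hc]
    rw [h1]
    exact hconstΦ c
  -- conclude: F is constant
  intro x
  have hSfin : S.Finite := S.toFinite
  have hex : ∀ e : R × C, ∃ w : R × C → ℝ, e ∈ S →
      w ∈ Wsp T (T.sup ∪ P) ∧ w e = 1 ∧ ∀ f ∈ T.sup, f ≠ e → w f = 0 := by
    intro e
    by_cases he : e ∈ S
    · obtain ⟨w, h1, h2, h3⟩ := exists_unit_vec hN1 hP hN2 (hSsub he)
      exact ⟨w, fun _ => ⟨h1, h2, h3⟩⟩
    · exact ⟨0, fun h => absurd h he⟩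
  choose u hu using hex
  set wx : R × C → ℝ := ∑ e ∈ hSfin.toFinset, (x e - T.val e) • u e with hwxdef
  have hwxW : wx ∈ Wsp T (T.sup ∪ P) :=
    Submodule.sum_mem _ (fun e he =>
      Submodule.smul_mem _ _ ((hu e (hSfin.mem_toFinset.mp he)).1))
  have hagree : ∀ f ∈ S, x f = (T.val + wx) f := by
    intro f hf
    have hfS : f ∈ hSfin.toFinset := hSfin.mem_toFinset.mpr hf
    have hval : wx f = x f - T.val f := by
      rw [hwxdef, Finset.sum_apply]
      rw [Finset.sum_eq_single f]
      · simp [(hu f hf).2.1]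
      · intro e he hef
        have hz : u e f = 0 :=
          (hu e (hSfin.mem_toFinset.mp he)).2.2 f (hSsub hf) (fun h => hef h.symm)
        simp [hz]
      · intro h; exact absurd hfS h
    simp only [Pi.add_apply, hval]
    ring
  rw [hdS x (T.val + wx) hagree]
  exact hWconst wx hwxW
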